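/- Product rule identity at the level of power functions: for all quaternions q and all m, n ≥ 1, D(q^{m+n}) = q^m·Dr(q^n) + Dr(q^m)·q^n + Dr(q^m)·q̲·Dr(q^n) evaluated with the closed forms Dr(q^k) := D(q^k) = -2 ∑_{j=1}^{k} q^{k-j} q̄^{j-1} and q̲ = (q - q̄)/2; that is, -2 ∑_{j=1}^{m+n} q^{m+n-j} q̄^{j-1} = q^m·(-2∑_{j=1}^{n} q^{n-j} q̄^{j-1}) + (-2∑_{j=1}^{m} q^{m-j} q̄^{j-1})·q^n + (-2∑_{j=1}^{m} q^{m-j} q̄^{j-1})·q̲·(-2∑_{j=1}^{n} q^{n-j} q̄^{j-1}). -/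

import Mathlib

open scoped Quaternion

/-- The closed form of the Fueter operator on monomials:
`D(q^k) = -2 ∑_{j=1}^{k} q^{k-j} q̄^{j-1}`. -/
noncomputable def Dpow (q : ℍ[ℝ]) (k : ℕ) : ℍ[ℝ] :=
  -2 * ∑ j ∈ Finset.range k, q ^ (k - 1 - j) * (star q) ^ j

/-- Product-rule identity at the level of power functions: for all `m, n ≥ 1`,
`D(q^{m+n}) = q^m·D(q^n) + D(q^m)·q^n + D(q^m)·q̲·D(q^n)` with `q̲ = (q - q̄)/2`. -/
theorem Dpow_product_rule (q : ℍ[ℝ]) (m n : ℕ) (hm : 1 ≤ m) (hn : 1 ≤ n) :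
    Dpow q (m + n) =
      q ^ m * Dpow q n + Dpow q m * q ^ n +
        Dpow q m * ((q - star q) / 2) * Dpow q n := by
  have hc : Commute q (star q) := by
    unfold Commute SemiconjBy
    rw [Quaternion.self_mul_star, Quaternion.star_mul_self]
  set y := star q with hy
  set S : ℕ → ℍ[ℝ] := fun k => ∑ j ∈ Finset.range k, q ^ (k - 1 - j) * y ^ j with hS
  have hSrefl : ∀ k, S k = ∑ i ∈ Finset.range k, q ^ i * y ^ (k - 1 - i) := by
    intro k
    rw [hS]
    simp only []
    rw [← Finset.sum_range_reflect (fun i => q ^ i * y ^ (k - 1 - i)) k]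
    refine Finset.sum_congr rfl fun j hj => ?_
    rw [Finset.mem_range] at hj
    congr 2
    omega
  -- (q - y) * S n = q^n - y^n
  have hgeom : (q - y) * S n = q ^ n - y ^ n := by
    rw [hSrefl]; exact hc.mul_geom_sum₂ n
  -- split S (m+n)
  have hsplit : S (m + n) = q ^ m * S n + S m * y ^ n := by
    rw [hS]
    simp only []
    rw [Nat.add_comm m n, Finset.sum_range_add]
    congr 1
    · rw [Finset.mul_sum]
      refine Finset.sum_congr rfl fun j hj => ?_
      rw [Finset.mem_range] at hj
      rw [← mul_assoc, ← pow_add]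
      congr 2
      omega
    · rw [Finset.sum_mul]
      refine Finset.sum_congr rfl fun j hj => ?_
      rw [Finset.mem_range] at hj
      rw [mul_assoc, ← pow_add]
      congr 2
      · omega
      · omega
  have hD : ∀ k, Dpow q k = -2 * S k := fun k => rfl
  rw [hD, hD, hD, hsplit]
  have h2 : (2 : ℍ[ℝ]) * ((q - y) / 2) = q - y := by
    rw [(Commute.ofNat_left 2 ((q - y) / 2)).eq, div_mul_cancel₀ _ (by
      have : ((2:ℝ) : ℍ[ℝ]) ≠ 0 := by
        intro h
        have := Quaternion.coe_injective (h.trans (Quaternion.coe_zero).symm)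
        norm_num at this
      exact this)]
  have h3 : -2 * S m * ((q - y) / 2) * (-2 * S n) = 2 * (S m * ((q - y) * S n)) := by
    conv_rhs => rw [← h2]
    noncomm_ring
  rw [h3, hgeom]
  noncomm_ring
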